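/- Let H be a finite-dimensional Hopf algebra, T a right integral in H* and t a left integral in H with T(t) = 1. Then T(S(h)t₁)t₂ = h for all h ∈ H. -/

import Mathlib

open TensorProduct LinearMap

set_option maxHeartbeats 1000000
set_option synthInstance.maxHeartbeats 400000

noncomputable section

variable (k : Type*) [Field k]
variable (H : Type*) [Ring H] [HopfAlgebra k H]
variable (A : Type*) [Ring A] [Algebra k A]

/-- A left partial action of a Hopf algebra `H` on an algebra `A` (Caenepeel–Janssen):
(PA1) `h·(ab) = (h₁·a)(h₂·b)`, (PA2) `1·a = a`, (PA3) `h·(g·a) = (h₁·1)((h₂g)·a)`. -/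
structure PartialAction where
  act : H →ₗ[k] A →ₗ[k] A
  pa1 : ∀ a b : A, act.flip (a * b) =
    LinearMap.mul' k A ∘ₗ TensorProduct.map (act.flip a) (act.flip b) ∘ₗ Coalgebra.comul
  pa2 : ∀ a : A, act 1 a = a
  pa3 : ∀ (g : H) (a : A), act.flip (act g a) =
    LinearMap.mul' k A ∘ₗ
      TensorProduct.map (act.flip 1) ((act.flip a) ∘ₗ LinearMap.mulRight k g) ∘ₗ Coalgebra.comul

variable {k H A}

/-- (PA4): the partial action is symmetric: `h·(g·a) = ((h₁g)·a)(h₂·1)`. -/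
def PartialAction.IsSymmetric (α : PartialAction k H A) : Prop :=
  ∀ (g : H) (a : A), α.act.flip (α.act g a) =
    LinearMap.mul' k A ∘ₗ
      TensorProduct.map ((α.act.flip a) ∘ₗ LinearMap.mulRight k g) (α.act.flip 1) ∘ₗ
        Coalgebra.comul

/-- Left invariants `A^H`. -/
def PartialAction.leftInv (α : PartialAction k H A) : Set A :=
  {a | ∀ h : H, α.act h a = a * α.act h 1}

/-- Right invariants `A^{H,r}`. -/
def PartialAction.rightInv (α : PartialAction k H A) : Set A :=
  {a | ∀ h : H, α.act h a = α.act h 1 * a}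

/-- `t` is a left integral in `H`. -/
def IsLeftIntegral (t : H) : Prop := ∀ h : H, h * t = Coalgebra.counit (R := k) h • t

/-- `t` is a right integral in `H`. -/
def IsRightIntegral (t : H) : Prop := ∀ h : H, t * h = Coalgebra.counit (R := k) h • t

/-- Convolution product on the dual `H* = H →ₗ[k] k`. -/
def conv (f g : H →ₗ[k] k) : H →ₗ[k] k :=
  LinearMap.mul' k k ∘ₗ TensorProduct.map f g ∘ₗ Coalgebra.comul

/-- `T ∈ H*` is a right integral: `T ∗ f = f(1) T`. -/
def IsRightIntegralDual (T : H →ₗ[k] k) : Prop := ∀ f : H →ₗ[k] k, conv T f = f 1 • T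

/-- `T ∈ H*` is a left integral: `f ∗ T = f(1) T`. -/
def IsLeftIntegralDual (T : H →ₗ[k] k) : Prop := ∀ f : H →ₗ[k] k, conv f T = f 1 • T

namespace PartialAction

variable (α : PartialAction k H A)

/-- `ψ (h ⊗ b) = Σ (h₁·b) ⊗ h₂`. -/
def psi : H ⊗[k] A →ₗ[k] A ⊗[k] H :=
  TensorProduct.map (TensorProduct.lift α.act) LinearMap.id
    ∘ₗ (TensorProduct.assoc k H A H).symm.toLinearMap
    ∘ₗ TensorProduct.map LinearMap.id (TensorProduct.comm k H A).toLinearMap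
    ∘ₗ (TensorProduct.assoc k H H A).toLinearMap
    ∘ₗ TensorProduct.map Coalgebra.comul LinearMap.id

/-- The smash product multiplication on `A ⊗ H`:
`(a # h)(b # g) = a(h₁·b) # h₂g`, as a linear map on the tensor square. -/
def smashMul' : (A ⊗[k] H) ⊗[k] (A ⊗[k] H) →ₗ[k] A ⊗[k] H :=
  TensorProduct.map (LinearMap.mul' k A) (LinearMap.mul' k H)
    ∘ₗ (TensorProduct.assoc k A A (H ⊗[k] H)).symm.toLinearMap
    ∘ₗ TensorProduct.map LinearMap.id
        ((TensorProduct.assoc k A H H).toLinearMap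
          ∘ₗ TensorProduct.map α.psi LinearMap.id
          ∘ₗ (TensorProduct.assoc k H A H).symm.toLinearMap)
    ∘ₗ (TensorProduct.assoc k A H (A ⊗[k] H)).toLinearMap

/-- The smash product multiplication, curried. -/
def sm : (A ⊗[k] H) →ₗ[k] (A ⊗[k] H) →ₗ[k] A ⊗[k] H := TensorProduct.curry α.smashMul'

/-- `1 # 1`. -/
def unit : A ⊗[k] H := (1 : A) ⊗ₜ[k] (1 : H)

/-- `j x = x · (1 # 1)`; the element `a #̲ h` of the partial smash product. -/
def j : A ⊗[k] H →ₗ[k] A ⊗[k] H := α.sm.flip (unit)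

/-- The partial smash product `A #̲ H`, as a subspace of `A ⊗ H`. -/
def smash : Submodule k (A ⊗[k] H) := LinearMap.range α.j

/-- The action of `A # H` on `A`: `(a # h) ▸ b = a (h·b)`. -/
def act2 : A ⊗[k] H →ₗ[k] A →ₗ[k] A :=
  TensorProduct.curry (LinearMap.mul' k A
    ∘ₗ TensorProduct.map LinearMap.id (TensorProduct.lift α.act)
    ∘ₗ (TensorProduct.assoc k A H A).toLinearMap)

end PartialAction

/-- `Φ(a # h) = a T(h)`. -/
def PhiMap (T : H →ₗ[k] k) : A ⊗[k] H →ₗ[k] A :=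
  (TensorProduct.rid k A).toLinearMap ∘ₗ TensorProduct.map LinearMap.id T

/-- `θ(f) = f(t₁) t₂`. -/
def thetaMap (t : H) : (H →ₗ[k] k) →ₗ[k] H :=
  (TensorProduct.lid k H).toLinearMap
    ∘ₗ LinearMap.applyₗ (Coalgebra.comul (R := k) t)
    ∘ₗ (TensorProduct.mapBilinear (RingHom.id k) H H k H).flip LinearMap.id

section AuxIntegral

variable {k : Type*} [Field k] {H : Type*} [Ring H] [HopfAlgebra k H]

open Coalgebra HopfAlgebra

/-- From `(id ⊗ ε)Δh = h ⊗ 1`: `∑ ε(h₂) • h₁ = h`. -/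
lemma aux_repr_counit_right {h : H} (r : Coalgebra.Repr k h (H × H)) :
    ∑ j ∈ r.index, counit (R := k) (r.right j) • r.left j = h := by
  have h1 := Coalgebra.sum_tmul_counit_eq r
  calc ∑ j ∈ r.index, counit (R := k) (r.right j) • r.left j
      = TensorProduct.rid k H
          (∑ j ∈ r.index, r.left j ⊗ₜ[k] counit (R := k) (r.right j)) := by
        rw [map_sum]
        exact Finset.sum_congr rfl fun j _ => (TensorProduct.rid_tmul _ _).symm
    _ = TensorProduct.rid k H (h ⊗ₜ[k] 1) := by rw [h1]
    _ = h := by simp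

/-- From `(ε ⊗ id)Δh = 1 ⊗ h`: `∑ ε(h₁) • h₂ = h`. -/
lemma aux_repr_counit_left {h : H} (r : Coalgebra.Repr k h (H × H)) :
    ∑ j ∈ r.index, counit (R := k) (r.left j) • r.right j = h := by
  have h1 := Coalgebra.sum_counit_tmul_eq r
  calc ∑ j ∈ r.index, counit (R := k) (r.left j) • r.right j
      = TensorProduct.lid k H
          (∑ j ∈ r.index, counit (R := k) (r.left j) ⊗ₜ[k] r.right j) := by
        rw [map_sum]
        exact Finset.sum_congr rfl fun j _ => (TensorProduct.lid_tmul _ _).symm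
    _ = TensorProduct.lid k H ((1 : k) ⊗ₜ[k] h) := by rw [h1]
    _ = h := by simp

/-- Key Sweedler computation: `∑ (S(h₁) ⊗ 1) * Δ(h₂) = 1 ⊗ h`. -/
lemma aux_antipode_comul (h : H) (r : Coalgebra.Repr k h (H × H)) :
    ∑ j ∈ r.index,
        ((antipode (R := k) (r.left j)) ⊗ₜ[k] (1 : H)) * (comul (R := k) (r.right j))
      = (1 : H) ⊗ₜ[k] h := by
  set S' : H →ₗ[k] H := antipode (R := k) with hS'
  set W : H ⊗[k] (H ⊗[k] H) →ₗ[k] H ⊗[k] H :=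
    LinearMap.mul' k (H ⊗[k] H) ∘ₗ
      TensorProduct.map
        ((Algebra.TensorProduct.includeLeft : H →ₐ[k] H ⊗[k] H).toLinearMap ∘ₗ S')
        LinearMap.id with hWdef
  have hW : ∀ (x : H) (z : H ⊗[k] H), W (x ⊗ₜ z) = (S' x ⊗ₜ[k] (1 : H)) * z := by
    intro x z
    simp [hWdef, LinearMap.mul'_apply]
  have hWassoc : ∀ (z : H ⊗[k] H) (x : H),
      W ((TensorProduct.assoc k H H H) (z ⊗ₜ x)) =
        (LinearMap.mul' k H) (S'.rTensor H z) ⊗ₜ[k] x := by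
    intro z x
    induction z using TensorProduct.induction_on with
    | zero =>
        rw [TensorProduct.zero_tmul, _root_.map_zero, _root_.map_zero, _root_.map_zero,
          _root_.map_zero, TensorProduct.zero_tmul]
    | tmul c d =>
        rw [TensorProduct.assoc_tmul, hW, LinearMap.rTensor_tmul, LinearMap.mul'_apply,
          Algebra.TensorProduct.tmul_mul_tmul, one_mul]
    | add u v hu hv =>
        rw [TensorProduct.add_tmul, _root_.map_add, _root_.map_add, hu, hv, _root_.map_add,
          _root_.map_add, TensorProduct.add_tmul]
  have e1 : (comul (R := k)).lTensor H (comul (R := k) h)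
      = ∑ j ∈ r.index, r.left j ⊗ₜ[k] comul (R := k) (r.right j) := by
    rw [← r.eq, map_sum]
    simp
  have e2 : (comul (R := k)).rTensor H (comul (R := k) h)
      = ∑ j ∈ r.index, comul (R := k) (r.left j) ⊗ₜ[k] r.right j := by
    rw [← r.eq, map_sum]
    simp
  calc
    ∑ j ∈ r.index, (S' (r.left j) ⊗ₜ[k] (1 : H)) * comul (R := k) (r.right j)
        = W (∑ j ∈ r.index, r.left j ⊗ₜ[k] comul (R := k) (r.right j)) := by
          rw [map_sum]
          exact Finset.sum_congr rfl fun j _ => (hW _ _).symm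
    _ = W ((TensorProduct.assoc k H H H)
          ((comul (R := k)).rTensor H (comul (R := k) h))) := by
          rw [Coalgebra.coassoc_apply, e1]
    _ = ∑ j ∈ r.index,
          (LinearMap.mul' k H) (S'.rTensor H (comul (R := k) (r.left j))) ⊗ₜ[k] r.right j := by
          rw [e2, map_sum, map_sum]
          exact Finset.sum_congr rfl fun j _ => hWassoc _ _
    _ = ∑ j ∈ r.index, counit (R := k) (r.left j) • ((1 : H) ⊗ₜ[k] r.right j) := by
          refine Finset.sum_congr rfl fun j _ => ?_
          rw [hS', HopfAlgebra.mul_antipode_rTensor_comul_apply,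
            Algebra.algebraMap_eq_smul_one]
          rw [TensorProduct.smul_tmul']
    _ = (1 : H) ⊗ₜ[k] (∑ j ∈ r.index, counit (R := k) (r.left j) • r.right j) := by
          rw [TensorProduct.tmul_sum]
          exact Finset.sum_congr rfl fun j _ => ((TensorProduct.tmul_smul _ _ _).symm)
    _ = (1 : H) ⊗ₜ[k] h := by rw [aux_repr_counit_left r]

/-- Key identity: `(S(h) ⊗ 1) Δt = (1 ⊗ h) Δt` when `t` is a left integral. -/
lemma aux_F1 (t : H) (ht : IsLeftIntegral (k := k) t) (h : H) :
    ((antipode (R := k) h) ⊗ₜ[k] (1 : H)) * comul (R := k) t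
      = ((1 : H) ⊗ₜ[k] h) * comul (R := k) t := by
  set S' : H →ₗ[k] H := antipode (R := k) with hS'
  set r := Coalgebra.Repr.arbitrary k h with hr
  have hcounit : ∑ j ∈ r.index, counit (R := k) (r.right j) • r.left j = h :=
    aux_repr_counit_right r
  have hSsum : ∑ j ∈ r.index, counit (R := k) (r.right j) • S' (r.left j) = S' h := by
    calc ∑ j ∈ r.index, counit (R := k) (r.right j) • S' (r.left j)
        = S' (∑ j ∈ r.index, counit (R := k) (r.right j) • r.left j) := by
          rw [map_sum]
          exact Finset.sum_congr rfl fun j _ => (map_smul S' _ _).symm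
      _ = S' h := by rw [hcounit]
  calc
    (S' h ⊗ₜ[k] (1 : H)) * comul (R := k) t
        = ((∑ j ∈ r.index, counit (R := k) (r.right j) • S' (r.left j)) ⊗ₜ[k] (1 : H)) *
            comul (R := k) t := by rw [hSsum]
    _ = ∑ j ∈ r.index,
          (S' (r.left j) ⊗ₜ[k] (1 : H)) * (counit (R := k) (r.right j) • comul (R := k) t) := by
          rw [TensorProduct.sum_tmul, Finset.sum_mul]
          refine Finset.sum_congr rfl fun j _ => ?_
          rw [← TensorProduct.smul_tmul', smul_mul_assoc, ← mul_smul_comm]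
    _ = ∑ j ∈ r.index,
          (S' (r.left j) ⊗ₜ[k] (1 : H)) * (comul (R := k) (r.right j) * comul (R := k) t) := by
          refine Finset.sum_congr rfl fun j _ => ?_
          have : comul (R := k) (r.right j * t) = counit (R := k) (r.right j) • comul (R := k) t := by
            rw [ht (r.right j), map_smul]
          rw [← this, Bialgebra.comul_mul]
    _ = (∑ j ∈ r.index,
          (S' (r.left j) ⊗ₜ[k] (1 : H)) * comul (R := k) (r.right j)) * comul (R := k) t := by
          rw [Finset.sum_mul]
          exact Finset.sum_congr rfl fun j _ => (mul_assoc _ _ _).symm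
    _ = ((1 : H) ⊗ₜ[k] h) * comul (R := k) t := by
          rw [aux_antipode_comul h r]

/-- `(T ⊗ id)(Δt) = 1` when `T` is a right integral with `T t = 1`. -/
lemma aux_F2 (T : H →ₗ[k] k) (t : H) (hT : IsRightIntegralDual T) (hTt : T t = 1) :
    (TensorProduct.lid k H)
      (TensorProduct.map T LinearMap.id (comul (R := k) t)) = 1 := by
  set x : H := (TensorProduct.lid k H)
      (TensorProduct.map T LinearMap.id (comul (R := k) t)) with hx
  have key : ∀ (f : H →ₗ[k] k) (z : H ⊗[k] H),
      f ((TensorProduct.lid k H) (TensorProduct.map T LinearMap.id z))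
        = LinearMap.mul' k k (TensorProduct.map T f z) := by
    intro f z
    induction z using TensorProduct.induction_on with
    | zero => simp
    | tmul a b => simp [LinearMap.mul'_apply, smul_eq_mul, mul_comm]
    | add u v hu hv => simp [map_add, hu, hv]
  have hfx : ∀ f : H →ₗ[k] k, f x = f 1 := by
    intro f
    have h1 : conv T f t = (f 1 • T) t := by rw [hT f]
    have h2 : conv T f t = LinearMap.mul' k k (TensorProduct.map T f (comul (R := k) t)) := rfl
    rw [hx, key f, ← h2, h1]
    simp [smul_eq_mul, hTt]
  have : ∀ f : Module.Dual k H, f (x - 1) = 0 := by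
    intro f
    rw [map_sub, hfx f, sub_self]
  exact sub_eq_zero.mp ((Module.forall_dual_apply_eq_zero_iff k (x - 1)).mp this)

end AuxIntegral

/-- for `H` finite-dimensional, `T` a right integral in `H*` and `t` a
left integral in `H` with `T(t) = 1`, one has `T(S(h)t₁)t₂ = h` for all `h`. -/
theorem integral_antipode_formula
    {k : Type*} [Field k] {H : Type*} [Ring H] [HopfAlgebra k H]
    [Module.Finite k H]
    (T : H →ₗ[k] k) (t : H) (hT : IsRightIntegralDual T)
    (ht : IsLeftIntegral (k := k) t) (hTt : T t = 1) (h : H) :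
    (TensorProduct.lid k H)
      (TensorProduct.map (T ∘ₗ LinearMap.mulLeft k (HopfAlgebra.antipode (R := k) h))
        LinearMap.id (Coalgebra.comul (R := k) t)) = h := by
  set S' : H →ₗ[k] H := HopfAlgebra.antipode (R := k) with hS'
  set r := Coalgebra.Repr.arbitrary k t with hr
  have e : ∑ i ∈ r.index, (S' h * r.left i) ⊗ₜ[k] r.right i
      = ∑ i ∈ r.index, r.left i ⊗ₜ[k] (h * r.right i) := by
    have l1 : ∀ i, (S' h * r.left i) ⊗ₜ[k] r.right i
        = (S' h ⊗ₜ[k] (1 : H)) * (r.left i ⊗ₜ[k] r.right i) := by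
      intro i; rw [Algebra.TensorProduct.tmul_mul_tmul, one_mul]
    have l2 : ∀ i, r.left i ⊗ₜ[k] (h * r.right i)
        = ((1 : H) ⊗ₜ[k] h) * (r.left i ⊗ₜ[k] r.right i) := by
      intro i; rw [Algebra.TensorProduct.tmul_mul_tmul, one_mul]
    calc ∑ i ∈ r.index, (S' h * r.left i) ⊗ₜ[k] r.right i
        = (S' h ⊗ₜ[k] (1 : H)) * ∑ i ∈ r.index, r.left i ⊗ₜ[k] r.right i := by
          rw [Finset.mul_sum]; exact Finset.sum_congr rfl fun i _ => l1 i
      _ = (S' h ⊗ₜ[k] (1 : H)) * Coalgebra.comul (R := k) t := by rw [r.eq]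
      _ = ((1 : H) ⊗ₜ[k] h) * Coalgebra.comul (R := k) t := aux_F1 t ht h
      _ = ((1 : H) ⊗ₜ[k] h) * ∑ i ∈ r.index, r.left i ⊗ₜ[k] r.right i := by rw [r.eq]
      _ = ∑ i ∈ r.index, r.left i ⊗ₜ[k] (h * r.right i) := by
          rw [Finset.mul_sum]; exact Finset.sum_congr rfl fun i _ => (l2 i).symm
  have F2 := aux_F2 T t hT hTt
  rw [← r.eq, map_sum, map_sum] at F2
  simp only [TensorProduct.map_tmul, LinearMap.id_coe, id_eq, TensorProduct.lid_tmul] at F2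
  -- F2 : ∑ T aᵢ • bᵢ = 1
  rw [← r.eq, map_sum, map_sum]
  simp only [TensorProduct.map_tmul, LinearMap.coe_comp, Function.comp_apply,
    LinearMap.mulLeft_apply, LinearMap.id_coe, id_eq, TensorProduct.lid_tmul]
  -- goal : ∑ T (S' h * aᵢ) • bᵢ = h
  have e' := congrArg ((TensorProduct.lid k H).toLinearMap ∘ₗ
      TensorProduct.map T LinearMap.id) e
  simp only [map_sum, LinearMap.coe_comp, LinearEquiv.coe_coe, Function.comp_apply,
    TensorProduct.map_tmul, LinearMap.id_coe, id_eq, TensorProduct.lid_tmul] at e'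
  rw [e']
  calc ∑ j ∈ r.index, T (r.left j) • (h * r.right j)
      = h * ∑ j ∈ r.index, T (r.left j) • r.right j := by
        rw [Finset.mul_sum]
        exact Finset.sum_congr rfl fun j _ => (mul_smul_comm _ _ _).symm
    _ = h := by rw [F2, mul_one]

end
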